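/- For a prime ℓ, the integral over ℤ_ℓ^× (with normalized Haar measure) of the function x ↦ ℓ^{-v_ℓ(x-1)} equals (ℓ² - ℓ - 1)/(ℓ² - 1). -/

import Mathlib

open MeasureTheory

section Aux

theorem meas_ker_aux {G : Type*} [Group G] [MeasurableSpace G] [MeasurableMul G]
    (μ : Measure G) [μ.IsMulLeftInvariant] (H : Subgroup G)
    (hm : MeasurableSet (H : Set G)) [Finite (G ⧸ H)] :
    (H.index : ENNReal) * μ (H : Set G) = μ Set.univ := by
  classical
  have hfiber : ∀ g : G, (QuotientGroup.mk ⁻¹' {(g : G ⧸ H)} : Set G)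
      = (fun x => g⁻¹ * x) ⁻¹' (H : Set G) := by
    intro g
    ext x
    simp only [Set.mem_preimage, Set.mem_singleton_iff, SetLike.mem_coe]
    rw [eq_comm, QuotientGroup.eq]
  have hmeas : ∀ q : G ⧸ H, MeasurableSet (QuotientGroup.mk ⁻¹' {q} : Set G) := by
    intro q
    induction q using QuotientGroup.induction_on with
    | H g => rw [hfiber]; exact measurable_const_mul _ hm
  have hμfiber : ∀ q : G ⧸ H, μ (QuotientGroup.mk ⁻¹' {q} : Set G) = μ (H : Set G) := by
    intro q
    induction q using QuotientGroup.induction_on with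
    | H g => rw [hfiber]; exact measure_preimage_mul μ _ _
  have hunion : (⋃ q : G ⧸ H, (QuotientGroup.mk ⁻¹' {q} : Set G)) = Set.univ := by
    ext x; simp only [Set.mem_iUnion, Set.mem_univ, iff_true]
    exact ⟨(x : G ⧸ H), rfl⟩
  haveI : Fintype (G ⧸ H) := Fintype.ofFinite _
  rw [← hunion, measure_iUnion (fun i j hij => Set.disjoint_iff.2 (fun x hx => by
      simp only [Set.mem_inter_iff, Set.mem_preimage, Set.mem_singleton_iff] at hx
      exact absurd (hx.1.symm.trans hx.2) hij)) hmeas]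
  simp only [hμfiber]
  rw [tsum_fintype, Finset.sum_const, Finset.card_univ, nsmul_eq_mul,
    Subgroup.index_eq_card, Nat.card_eq_fintype_card]

variable {ℓ : ℕ} [hℓ : Fact ℓ.Prime]

/-- The kernel subgroup `U_k = 1 + ℓ^k ℤ_ℓ` inside `ℤ_ℓˣ`. -/
noncomputable def Usub (ℓ : ℕ) [Fact ℓ.Prime] (k : ℕ) : Subgroup ℤ_[ℓ]ˣ :=
  MonoidHom.ker (Units.map (PadicInt.toZModPow (p := ℓ) k).toMonoidHom)

theorem mem_Usub_iff (k : ℕ) (u : ℤ_[ℓ]ˣ) :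
    u ∈ Usub ℓ k ↔ ‖(u : ℤ_[ℓ]) - 1‖ ≤ (ℓ : ℝ) ^ (-(k : ℤ)) := by
  rw [PadicInt.norm_le_pow_iff_mem_span_pow, ← PadicInt.ker_toZModPow, RingHom.mem_ker,
    map_sub, map_one, sub_eq_zero]
  constructor
  · intro h
    have := congrArg Units.val h
    simpa using this
  · intro h
    ext
    simpa using h

theorem toZModPow_surjective (k : ℕ) :
    Function.Surjective (PadicInt.toZModPow (p := ℓ) k) := by
  intro y
  obtain ⟨m, hm⟩ := ZMod.intCast_surjective (n := ℓ ^ k) y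
  exact ⟨(m : ℤ_[ℓ]), by rw [map_intCast, hm]⟩

theorem unitsMap_surjective (k : ℕ) :
    Function.Surjective (Units.map (PadicInt.toZModPow (p := ℓ) k).toMonoidHom) := by
  intro v
  rcases k with _ | k
  · haveI : Subsingleton (ZMod (ℓ ^ 0)) := by
      rw [pow_zero]; infer_instance
    exact ⟨1, Subsingleton.elim _ _⟩
  obtain ⟨x, hx⟩ := toZModPow_surjective (ℓ := ℓ) (k + 1) (v : ZMod (ℓ ^ (k + 1)))
  have hxu : IsUnit x := by
    by_contra hc
    have h1 : ‖x‖ < 1 := PadicInt.not_isUnit_iff.mp hc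
    have h2 : ‖x‖ ≤ (ℓ : ℝ) ^ (-(1 : ℕ) : ℤ) := by
      rw [PadicInt.norm_le_pow_iff_norm_lt_pow_add_one]
      simpa using h1
    rw [PadicInt.norm_le_pow_iff_mem_span_pow, ← PadicInt.ker_toZModPow, RingHom.mem_ker] at h2
    have h3 : (ZMod.cast (PadicInt.toZModPow (k + 1) x) : ZMod (ℓ ^ 1)) = 0 := by
      rw [PadicInt.cast_toZModPow 1 (k + 1) (by omega), h2]
    have h4 : IsUnit (ZMod.castHom (pow_dvd_pow ℓ (show 1 ≤ k + 1 by omega)) (ZMod (ℓ ^ 1))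
        ((v : ZMod (ℓ ^ (k + 1))))) := v.isUnit.map _
    rw [hx] at h3
    rw [ZMod.castHom_apply, h3] at h4
    haveI : NeZero (ℓ ^ 1) := ⟨pow_ne_zero _ hℓ.out.ne_zero⟩
    haveI : Nontrivial (ZMod (ℓ ^ 1)) := by
      rw [pow_one]; exact ZMod.nontrivial_iff.mpr hℓ.out.one_lt.ne'
    exact not_isUnit_zero h4
  obtain ⟨u, hu⟩ := hxu
  refine ⟨u, Units.ext ?_⟩
  simpa [hu] using hx

theorem index_Usub (k : ℕ) : (Usub ℓ k).index = Nat.totient (ℓ ^ k) := by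
  haveI : NeZero (ℓ ^ k) := ⟨pow_ne_zero _ hℓ.out.ne_zero⟩
  rw [Usub, Subgroup.index_ker, MonoidHom.range_eq_top.2 (unitsMap_surjective k),
    Subgroup.card_top, Nat.card_eq_fintype_card, ZMod.card_units_eq_totient]

end Aux

/-- For the normalized Haar measure on `ℤ_ℓ^×`, the integral of
`x ↦ ℓ^{-v_ℓ(x-1)}` (which is exactly the `ℓ`-adic norm `‖x - 1‖`, with the
convention `ℓ^{-∞} = 0` at `x = 1`) equals `(ℓ² - ℓ - 1)/(ℓ² - 1)`. -/
theorem integral_padic_units_norm_sub_one (ℓ : ℕ) [Fact ℓ.Prime]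
    [MeasurableSpace ℤ_[ℓ]ˣ] [BorelSpace ℤ_[ℓ]ˣ]
    (μ : Measure ℤ_[ℓ]ˣ) [μ.IsMulLeftInvariant] (hμ : μ Set.univ = 1) :
    ∫ x : ℤ_[ℓ]ˣ, ‖(x : ℤ_[ℓ]) - 1‖ ∂μ
      = ((ℓ : ℝ) ^ 2 - ℓ - 1) / ((ℓ : ℝ) ^ 2 - 1) := by
  have hp : Fact ℓ.Prime := inferInstance
  have hℓ2 : (2 : ℝ) ≤ (ℓ : ℝ) := by exact_mod_cast hp.out.two_le
  have hℓ1 : (1 : ℝ) < (ℓ : ℝ) := by linarith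
  have hℓ0 : (ℓ : ℝ) ≠ 0 := by positivity
  haveI : SecondCountableTopology ℤ_[ℓ]ᵐᵒᵖ :=
    (MulOpposite.opHomeomorph : ℤ_[ℓ] ≃ₜ ℤ_[ℓ]ᵐᵒᵖ).symm.isEmbedding.secondCountableTopology
  haveI : SecondCountableTopology ℤ_[ℓ]ˣ :=
    Units.isEmbedding_embedProduct.secondCountableTopology
  haveI : IsFiniteMeasure μ := ⟨by rw [hμ]; exact ENNReal.one_lt_top⟩
  -- continuity
  have hcont : Continuous (fun u : ℤ_[ℓ]ˣ => ‖(u : ℤ_[ℓ]) - 1‖) :=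
    (Units.continuous_val.sub continuous_const).norm
  -- the subgroups
  have hUset : ∀ k : ℕ, (Usub ℓ k : Set ℤ_[ℓ]ˣ)
      = (fun u : ℤ_[ℓ]ˣ => ‖(u : ℤ_[ℓ]) - 1‖) ⁻¹' Set.Iic ((ℓ : ℝ) ^ (-(k : ℤ))) := by
    intro k; ext u
    simpa using mem_Usub_iff k u
  have hUmeas : ∀ k : ℕ, MeasurableSet (Usub ℓ k : Set ℤ_[ℓ]ˣ) := by
    intro k; rw [hUset]
    exact hcont.measurable measurableSet_Iic
  have hUfin : ∀ k : ℕ, (Usub ℓ k).FiniteIndex := by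
    intro k
    refine ⟨?_⟩
    rw [index_Usub]
    exact (Nat.totient_pos.mpr (pow_pos hp.out.pos k)).ne'
  have hμU : ∀ k : ℕ, μ (Usub ℓ k : Set ℤ_[ℓ]ˣ) = ((Nat.totient (ℓ ^ k) : ENNReal))⁻¹ := by
    intro k
    haveI := hUfin k
    have h := meas_ker_aux μ (Usub ℓ k) (hUmeas k)
    rw [hμ, index_Usub] at h
    have ht0 : (Nat.totient (ℓ ^ k) : ENNReal) ≠ 0 := by
      exact_mod_cast (Nat.totient_pos.mpr (pow_pos hp.out.pos k)).ne'
    have httop : (Nat.totient (ℓ ^ k) : ENNReal) ≠ ⊤ := ENNReal.natCast_ne_top _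
    rw [← one_mul (μ (Usub ℓ k : Set ℤ_[ℓ]ˣ)), ← ENNReal.inv_mul_cancel ht0 httop,
      mul_assoc, h, mul_one]
  -- the spheres
  set S : ℕ → Set ℤ_[ℓ]ˣ := fun k => {u : ℤ_[ℓ]ˣ | ‖(u : ℤ_[ℓ]) - 1‖ = (ℓ : ℝ) ^ (-(k : ℤ))}
    with hSdef
  have hSmeas : ∀ k : ℕ, MeasurableSet (S k) :=
    fun k => hcont.measurable (measurableSet_singleton _)
  have hinj : ∀ j k : ℕ, ((ℓ : ℝ) ^ (-(j : ℤ)) = (ℓ : ℝ) ^ (-(k : ℤ))) → j = k := by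
    intro j k h
    have := zpow_right_injective₀ (by positivity) hℓ1.ne' h
    omega
  have hSdisj : Pairwise (Function.onFun Disjoint S) := by
    intro j k hjk
    refine Set.disjoint_iff.2 (fun u hu => ?_)
    exact absurd (hinj j k (hu.1.symm.trans hu.2)) hjk
  have hSeq : ∀ k : ℕ, S k = (Usub ℓ k : Set ℤ_[ℓ]ˣ) \ (Usub ℓ (k + 1) : Set ℤ_[ℓ]ˣ) := by
    intro k
    ext u
    simp only [hSdef, Set.mem_setOf_eq, Set.mem_diff, SetLike.mem_coe, mem_Usub_iff]
    constructor
    · intro h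
      refine ⟨le_of_eq h, fun hle => ?_⟩
      have : (ℓ : ℝ) ^ (-((k : ℕ) + 1 : ℕ) : ℤ) < (ℓ : ℝ) ^ (-(k : ℤ)) := by
        apply zpow_lt_zpow_right₀ hℓ1
        push_cast; omega
      rw [h] at hle
      exact absurd hle (not_le.mpr this)
    · rintro ⟨h1, h2⟩
      have h3 : ¬ ‖(u : ℤ_[ℓ]) - 1‖ < (ℓ : ℝ) ^ ((-((k : ℕ) + 1 : ℕ) : ℤ) + 1) := by
        intro hlt
        exact h2 ((PadicInt.norm_le_pow_iff_norm_lt_pow_add_one _ _).mpr hlt)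
      have h4 : (-((k : ℕ) + 1 : ℕ) : ℤ) + 1 = -(k : ℤ) := by push_cast; ring
      rw [h4] at h3
      exact le_antisymm h1 (not_lt.mp h3)
  have hUsub : ∀ k : ℕ, (Usub ℓ (k + 1) : Set ℤ_[ℓ]ˣ) ⊆ (Usub ℓ k : Set ℤ_[ℓ]ˣ) := by
    intro k u hu
    rw [SetLike.mem_coe, mem_Usub_iff] at hu ⊢
    refine hu.trans (zpow_le_zpow_right₀ (le_of_lt hℓ1) ?_)
    push_cast; omega
  have hμS : ∀ k : ℕ, μ (S k)
      = μ (Usub ℓ k : Set ℤ_[ℓ]ˣ) - μ (Usub ℓ (k + 1) : Set ℤ_[ℓ]ˣ) := by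
    intro k
    rw [hSeq k]
    exact measure_diff (hUsub k) (hUmeas (k + 1)).nullMeasurableSet (measure_ne_top μ _)
  -- union of spheres is a.e. everything
  have hone : ∀ k : ℕ, (1 : ℤ_[ℓ]ˣ) ∈ Usub ℓ k := fun k => (Usub ℓ k).one_mem
  have hμ1 : μ {(1 : ℤ_[ℓ]ˣ)} = 0 := by
    have hb : ∀ k : ℕ, μ {(1 : ℤ_[ℓ]ˣ)} ≤ ((ℓ : ENNReal))⁻¹ ^ k := by
      intro k
      have h1 : μ {(1 : ℤ_[ℓ]ˣ)} ≤ μ (Usub ℓ (k + 1) : Set ℤ_[ℓ]ˣ) :=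
        measure_mono (by simpa using hone (k + 1))
      rw [hμU (k + 1)] at h1
      refine h1.trans ?_
      rw [← ENNReal.inv_pow]
      rw [ENNReal.inv_le_inv]
      have hk : (ℓ : ENNReal) ^ k ≤ (Nat.totient (ℓ ^ (k + 1)) : ENNReal) := by
        rw [Nat.totient_prime_pow hp.out (by omega)]
        have : ℓ ^ k ≤ ℓ ^ (k + 1 - 1) * (ℓ - 1) := by
          simp only [Nat.add_sub_cancel]
          have h2 : 1 ≤ ℓ - 1 := by have := hp.out.two_le; omega
          calc ℓ ^ k = ℓ ^ k * 1 := by ring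
          _ ≤ ℓ ^ k * (ℓ - 1) := by exact Nat.mul_le_mul_left _ h2
        exact_mod_cast this
      exact_mod_cast hk
    have htend : Filter.Tendsto (fun k : ℕ => ((ℓ : ENNReal))⁻¹ ^ k) Filter.atTop (nhds 0) := by
      apply ENNReal.tendsto_pow_atTop_nhds_zero_of_lt_one
      rw [ENNReal.inv_lt_one]
      exact_mod_cast hp.out.one_lt
    exact le_antisymm (ge_of_tendsto' htend hb) zero_le
  have hcompl : (⋃ k : ℕ, S k)ᶜ ⊆ {(1 : ℤ_[ℓ]ˣ)} := by
    intro u hu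
    simp only [Set.mem_compl_iff, Set.mem_iUnion, not_exists, hSdef, Set.mem_setOf_eq] at hu
    by_contra hne
    have hz : ((u : ℤ_[ℓ]) - 1) ≠ 0 := by
      intro h
      exact hne (by
        have : (u : ℤ_[ℓ]) = 1 := by linear_combination (norm := ring_nf) h
        exact Units.ext (by simpa using this))
    have := PadicInt.norm_eq_zpow_neg_valuation hz
    have hv : (0 : ℤ) ≤ ((u : ℤ_[ℓ]) - 1).valuation := by positivity
    refine hu (((u : ℤ_[ℓ]) - 1).valuation : ℤ).toNat ?_
    rw [this]
    congr 1
  have hae : (Set.univ : Set ℤ_[ℓ]ˣ) =ᵐ[μ] ⋃ k : ℕ, S k :=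
    (MeasureTheory.ae_eq_univ.mpr (measure_mono_null hcompl hμ1)).symm
  -- integrability
  have hint : Integrable (fun u : ℤ_[ℓ]ˣ => ‖(u : ℤ_[ℓ]) - 1‖) μ := by
    refine Integrable.mono' (integrable_const (2 : ℝ)) hcont.aestronglyMeasurable ?_
    refine Filter.Eventually.of_forall (fun u => ?_)
    rw [norm_norm]
    have h1 : ‖(u : ℤ_[ℓ]) - 1‖ ≤ 1 := PadicInt.norm_le_one _
    linarith
  -- split the integral
  have hsplit : ∫ x : ℤ_[ℓ]ˣ, ‖(x : ℤ_[ℓ]) - 1‖ ∂μ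
      = ∑' k : ℕ, ∫ x in S k, ‖(x : ℤ_[ℓ]) - 1‖ ∂μ := by
    rw [← setIntegral_univ, setIntegral_congr_set hae]
    exact integral_iUnion hSmeas hSdisj hint.integrableOn
  -- compute each piece
  have hpiece : ∀ k : ℕ, ∫ x in S k, ‖(x : ℤ_[ℓ]) - 1‖ ∂μ
      = (μ (S k)).toReal * (ℓ : ℝ) ^ (-(k : ℤ)) := by
    intro k
    rw [setIntegral_congr_fun (hSmeas k) (fun u hu => hu), setIntegral_const, smul_eq_mul, measureReal_def]
  -- the real values of the measures
  set a : ℕ → ℝ := fun k => ((Nat.totient (ℓ ^ k) : ℝ))⁻¹ with hadef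
  have hμSr : ∀ k : ℕ, (μ (S k)).toReal = a k - a (k + 1) := by
    intro k
    rw [hμS k, ENNReal.toReal_sub_of_le (measure_mono (hUsub k)) (measure_ne_top μ _),
      hμU k, hμU (k + 1)]
    simp [hadef, ENNReal.toReal_inv]
  have ha0 : a 0 = 1 := by simp [hadef]
  have hak : ∀ k : ℕ, a (k + 1) = ((ℓ : ℝ) ^ k * ((ℓ : ℝ) - 1))⁻¹ := by
    intro k
    rw [hadef]
    simp only
    rw [Nat.totient_prime_pow hp.out (by omega : 0 < k + 1)]
    congr 1
    push_cast [Nat.cast_sub hp.out.one_le]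
    simp
  -- the explicit series
  set r : ℝ := (((ℓ : ℝ) ^ 2))⁻¹ with hrdef
  have hr0 : 0 ≤ r := by positivity
  have hr1 : r < 1 := by
    rw [hrdef, inv_lt_one_iff₀]
    right; nlinarith
  have hℓm1 : (ℓ : ℝ) - 1 ≠ 0 := by intro h; linarith
  have hterm0 : (μ (S 0)).toReal * (ℓ : ℝ) ^ (-(0 : ℕ) : ℤ) = 1 - ((ℓ : ℝ) - 1)⁻¹ := by
    rw [hμSr 0, ha0, hak 0]
    push_cast
    simp
  have htermk : ∀ k : ℕ, (μ (S (k + 1))).toReal * (ℓ : ℝ) ^ (-((k : ℕ) + 1 : ℕ) : ℤ)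
      = r ^ (k + 1) := by
    intro k
    rw [hμSr (k + 1), hak k, hak (k + 1)]
    have hz : ((ℓ : ℝ)) ^ (-((k : ℕ) + 1 : ℕ) : ℤ) = ((ℓ : ℝ) ^ (k + 1))⁻¹ := by
      rw [zpow_neg, zpow_natCast]
    rw [hz, hrdef, inv_pow, ← pow_mul]
    field_simp
    ring
  -- summability
  have hsum1 : Summable (fun k : ℕ => r ^ (k + 1)) := by
    have := (summable_geometric_of_lt_one hr0 hr1).mul_left r
    simpa [pow_succ, mul_comm] using this
  have hsummable : Summable (fun k : ℕ => (μ (S k)).toReal * (ℓ : ℝ) ^ (-(k : ℤ))) := by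
    rw [← summable_nat_add_iff 1]
    refine hsum1.congr (fun k => ?_)
    exact (htermk k).symm
  -- put it together
  rw [hsplit]
  have hval : ∀ k : ℕ, ∫ x in S k, ‖(x : ℤ_[ℓ]) - 1‖ ∂μ
      = (μ (S k)).toReal * (ℓ : ℝ) ^ (-(k : ℤ)) := hpiece
  calc ∑' k : ℕ, ∫ x in S k, ‖(x : ℤ_[ℓ]) - 1‖ ∂μ
      = ∑' k : ℕ, (μ (S k)).toReal * (ℓ : ℝ) ^ (-(k : ℤ)) := by
        exact tsum_congr hval
    _ = (μ (S 0)).toReal * (ℓ : ℝ) ^ (-(0 : ℕ) : ℤ)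
        + ∑' k : ℕ, (μ (S (k + 1))).toReal * (ℓ : ℝ) ^ (-((k : ℕ) + 1 : ℕ) : ℤ) := by
        exact hsummable.tsum_eq_zero_add
    _ = (1 - ((ℓ : ℝ) - 1)⁻¹) + ∑' k : ℕ, r ^ (k + 1) := by
        rw [hterm0]
        congr 1
        exact tsum_congr htermk
    _ = (1 - ((ℓ : ℝ) - 1)⁻¹) + r * (1 - r)⁻¹ := by
        congr 1
        have : ∑' k : ℕ, r ^ (k + 1) = r * ∑' k : ℕ, r ^ k := by
          rw [← tsum_mul_left]
          exact tsum_congr (fun k => by ring)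
        rw [this, tsum_geometric_of_lt_one hr0 hr1]
    _ = ((ℓ : ℝ) ^ 2 - ℓ - 1) / ((ℓ : ℝ) ^ 2 - 1) := by
        rw [hrdef]
        have h2 : (ℓ : ℝ) ^ 2 - 1 ≠ 0 := by nlinarith
        have h3 : (1 : ℝ) - ((ℓ : ℝ) ^ 2)⁻¹ ≠ 0 := by
          have : ((ℓ : ℝ) ^ 2)⁻¹ < 1 := hr1
          intro h; linarith
        field_simp
        ring
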